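/- For each node i, the time-average expected Age of Information h_i = 1 / (p_i · ∏_{j≠i} (1 - p_j/(1 + d_{ij}))) is a convex function of the vector of transmission probabilities p ∈ (0,1]^N, for fixed positive constants d_{ij}. -/

import Mathlib

open Finset

private lemma convexOn_congr' {E : Type*} [AddCommMonoid E] [Module ℝ E]
    {s : Set E} {f g : E → ℝ} (hg : ConvexOn ℝ s g) (h : ∀ x ∈ s, f x = g x) :
    ConvexOn ℝ s f :=
  ⟨hg.1, fun x hx y hy a b ha hb hab => by
    rw [h _ hx, h _ hy, h _ (hg.1 hx hy ha hb hab)]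
    exact hg.2 hx hy ha hb hab⟩

private lemma convexOn_exp_comp {E : Type*} [AddCommMonoid E] [Module ℝ E]
    {s : Set E} {f : E → ℝ} (hf : ConvexOn ℝ s f) :
    ConvexOn ℝ s (fun x => Real.exp (f x)) := by
  refine ⟨hf.1, fun x hx y hy a b ha hb hab => ?_⟩
  calc Real.exp (f (a • x + b • y)) ≤ Real.exp (a * f x + b * f y) :=
        Real.exp_le_exp.2 (by simpa using hf.2 hx hy ha hb hab)
    _ ≤ a * Real.exp (f x) + b * Real.exp (f y) := by
        simpa using convexOn_exp.2 (Set.mem_univ (f x)) (Set.mem_univ (f y)) ha hb hab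

private lemma convexOn_neg_log : ConvexOn ℝ (Set.Ioi (0:ℝ)) (fun t => -Real.log t) :=
  (strictConcaveOn_log_Ioi.concaveOn).neg

private lemma aux_affine_concave (c : ℝ) : ConcaveOn ℝ (Set.Iio c) (fun t : ℝ => 1 - t / c) := by
  refine ⟨convex_Iio c, fun x _ y _ a b ha hb hab => le_of_eq ?_⟩
  have hb' : b = 1 - a := by linarith
  subst hb'
  simp only [smul_eq_mul]
  ring

private lemma aux_image (c : ℝ) (hc : 0 < c) :
    (fun t : ℝ => 1 - t / c) '' Set.Iio c = Set.Ioi 0 := by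
  ext y
  constructor
  · rintro ⟨t, ht, rfl⟩
    have : t / c < 1 := (div_lt_one hc).2 ht
    simp only [Set.mem_Ioi]; linarith
  · intro hy
    refine ⟨c * (1 - y), ?_, ?_⟩
    · simp only [Set.mem_Iio]
      nlinarith [Set.mem_Ioi.1 hy]
    · field_simp
      ring

private lemma aux_neg_log_affine (c : ℝ) (hc : 0 < c) :
    ConvexOn ℝ (Set.Iio c) (fun t : ℝ => -Real.log (1 - t / c)) := by
  have h := ConvexOn.comp_concaveOn (g := fun t => -Real.log t)
    (f := fun t : ℝ => 1 - t / c) (s := Set.Iio c)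
    (by rw [aux_image c hc]; exact convexOn_neg_log)
    (aux_affine_concave c)
    (by
      rw [aux_image c hc]
      intro x hx y hy hxy
      simp only
      exact neg_le_neg ((Real.strictMonoOn_log.monotoneOn) hx hy hxy))
  exact h

/-- The time-average expected AoI
`h_i(p) = 1 / (p_i · ∏_{j≠i} (1 - p_j/(1 + d_{ij})))`
is a convex function of `p` on `(0,1]^N`, for fixed positive constants `d i j`. -/
theorem aoi_convex (N : ℕ) (i : Fin N) (d : Fin N → Fin N → ℝ)
    (hd : ∀ i j, 0 < d i j) :
    ConvexOn ℝ {p : Fin N → ℝ | ∀ k, p k ∈ Set.Ioc (0 : ℝ) 1}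
      (fun p : Fin N → ℝ =>
        (p i * ∏ j ∈ Finset.univ.erase i, (1 - p j / (1 + d i j)))⁻¹) := by
  set s : Set (Fin N → ℝ) := {p : Fin N → ℝ | ∀ k, p k ∈ Set.Ioc (0 : ℝ) 1} with hs_def
  have hs : Convex ℝ s := by
    have : s = Set.pi Set.univ (fun _ : Fin N => Set.Ioc (0:ℝ) 1) := by
      ext p; simp [hs_def, Set.mem_pi]
    rw [this]
    exact convex_pi fun _ _ => convex_Ioc 0 1
  -- the exponent function
  set F : (Fin N → ℝ) → ℝ := fun p =>
    -Real.log (p i) + ∑ j ∈ Finset.univ.erase i, -Real.log (1 - p j / (1 + d i j)) with hF_def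
  -- convexity of each coordinate piece
  have hterm : ∀ j : Fin N, ConvexOn ℝ s (fun p : Fin N → ℝ => -Real.log (1 - p j / (1 + d i j))) := by
    intro j
    have hc : (0:ℝ) < 1 + d i j := by linarith [hd i j]
    have h1 := (aux_neg_log_affine (1 + d i j) hc).comp_linearMap ((LinearMap.proj j : (Fin N → ℝ) →ₗ[ℝ] ℝ))
    refine (ConvexOn.subset h1 ?_ hs)
    intro p hp
    simp only [Set.mem_preimage, LinearMap.proj_apply, Set.mem_Iio]
    have := (hp j).2
    linarith [hd i j]
  have hlogi : ConvexOn ℝ s (fun p : Fin N → ℝ => -Real.log (p i)) := by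
    have h1 := convexOn_neg_log.comp_linearMap ((LinearMap.proj i : (Fin N → ℝ) →ₗ[ℝ] ℝ))
    refine (ConvexOn.subset h1 ?_ hs)
    intro p hp
    simp only [Set.mem_preimage, LinearMap.proj_apply, Set.mem_Ioi]
    exact (hp i).1
  have hsum : ∀ t : Finset (Fin N),
      ConvexOn ℝ s (fun p : Fin N → ℝ => ∑ j ∈ t, -Real.log (1 - p j / (1 + d i j))) := by
    intro t
    induction t using Finset.induction_on with
    | empty => simpa using convexOn_const (0:ℝ) hs
    | insert a t' hj ih =>
      have := (hterm a).add ih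
      refine convexOn_congr' this fun p _ => ?_
      simp [Finset.sum_insert hj]
  have hF : ConvexOn ℝ s F := (hlogi.add (hsum _))
  have hexp : ConvexOn ℝ s (fun p => Real.exp (F p)) := convexOn_exp_comp hF
  refine convexOn_congr' hexp fun p hp => ?_
  have hpi : 0 < p i := (hp i).1
  have hu : ∀ j : Fin N, 0 < 1 - p j / (1 + d i j) := by
    intro j
    have hc : (1:ℝ) < 1 + d i j := by linarith [hd i j]
    have : p j / (1 + d i j) < 1 := (div_lt_one (by linarith)).2 (by linarith [(hp j).2])
    linarith
  have hprod : ∀ j ∈ Finset.univ.erase i, (0:ℝ) < 1 - p j / (1 + d i j) := fun j _ => hu j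
  rw [hF_def]
  simp only
  rw [Real.exp_add, Real.exp_sum]
  rw [mul_inv, ← Finset.prod_inv_distrib]
  congr 1
  · rw [Real.exp_neg, Real.exp_log hpi]
  · refine Finset.prod_congr rfl fun j hj => ?_
    rw [Real.exp_neg, Real.exp_log (hu j)]
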